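/- Let n ≥ 1, let a_{i0} > 0, a_{ii} > 0 for i = 1,…,n, a_{ij} ≥ 0 for i ≠ j, and let π₁,…,πₙ > 0 satisfy the detailed-balance condition π_i a_{ij} = π_j a_{ji} for i ≠ j. Define the SKT diffusion matrix A(u) with entries A_{ij}(u) = δ_{ij}(a_{i0} + Σ_{k=1}^n a_{ik} u_k) + a_{ij} u_i and the weighted Boltzmann entropy h(u) = Σ_{i=1}^n π_i(u_i(log u_i − 1) + 1), whose Hessian is h''(u) = diag(π_i/u_i). Then for all u ∈ (0,∞)ⁿ and all z ∈ ℝⁿ one has the strengthened coercivity zᵀ h''(u) A(u) z ≥ c_A |z|² + c'_A Σ_{i=1}^n z_i²/u_i, with c_A = min_{i} π_i a_{ii} > 0 and c'_A = min_{i} π_i a_{i0} > 0. -/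

import Mathlib

/-- Strengthened coercivity of the entropy-weighted SKT diffusion matrix under
detailed balance with `a_{i0} > 0`: `zᵀ h''(u) A(u) z ≥ c_A |z|² + c'_A ∑_i z_i²/u_i`
with `c_A = min_i π_i a_{ii} > 0` and `c'_A = min_i π_i a_{i0} > 0`. -/
theorem skt_strengthened_coercivity
    (n : ℕ) (hn : 1 ≤ n) (a0 : Fin n → ℝ) (a : Fin n → Fin n → ℝ) (p : Fin n → ℝ)
    (ha0 : ∀ i, 0 < a0 i) (haii : ∀ i, 0 < a i i) (haij : ∀ i j, i ≠ j → 0 ≤ a i j)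
    (hp : ∀ i, 0 < p i) (hdb : ∀ i j, i ≠ j → p i * a i j = p j * a j i)
    (u z : Fin n → ℝ) (hu : ∀ i, 0 < u i) :
    (Finset.univ.inf' (Finset.univ_nonempty_iff.mpr ⟨⟨0, hn⟩⟩) fun i => p i * a i i) *
        (∑ i, z i ^ 2) +
      (Finset.univ.inf' (Finset.univ_nonempty_iff.mpr ⟨⟨0, hn⟩⟩) fun i => p i * a0 i) *
        (∑ i, z i ^ 2 / u i) ≤
      ∑ i, ∑ j, z i * ((p i / u i) *
        ((if i = j then a0 i + ∑ k, a i k * u k else 0) + a i j * u i)) * z j := by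
  have hui : ∀ i, (u i) ≠ 0 := fun i => (hu i).ne'
  set c : ℝ := Finset.univ.inf' (Finset.univ_nonempty_iff.mpr ⟨⟨0, hn⟩⟩) fun i => p i * a i i
    with hc
  set c' : ℝ := Finset.univ.inf' (Finset.univ_nonempty_iff.mpr ⟨⟨0, hn⟩⟩) fun i => p i * a0 i
    with hc'
  have hcle : ∀ i, c ≤ p i * a i i := fun i =>
    Finset.inf'_le _ (Finset.mem_univ i)
  have hc'le : ∀ i, c' ≤ p i * a0 i := fun i =>
    Finset.inf'_le _ (Finset.mem_univ i)
  set g : Fin n → Fin n → ℝ := fun i j => (p i * a i j) * (u j * z i ^ 2 / u i + z i * z j)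
    with hg
  have hdb' : ∀ i j, p i * a i j = p j * a j i := by
    intro i j
    by_cases h : i = j
    · subst h; rfl
    · exact hdb i j h
  have hpa : ∀ i j, 0 ≤ p i * a i j := by
    intro i j
    by_cases h : i = j
    · subst h; exact (mul_pos (hp i) (haii i)).le
    · exact mul_nonneg (hp i).le (haij i j h)
  -- rewrite the quadratic form
  have hRHS : (∑ i, ∑ j, z i * ((p i / u i) *
        ((if i = j then a0 i + ∑ k, a i k * u k else 0) + a i j * u i)) * z j)
      = ∑ i, (p i * a0 i * (z i ^ 2 / u i)) + ∑ i, ∑ j, g i j := by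
    rw [← Finset.sum_add_distrib]
    refine Finset.sum_congr rfl fun i _ => ?_
    have hsplit : ∀ j, z i * ((p i / u i) *
        ((if i = j then a0 i + ∑ k, a i k * u k else 0) + a i j * u i)) * z j
        = (if i = j then z i ^ 2 * (p i / u i) * (a0 i + ∑ k, a i k * u k) else 0)
          + (p i * a i j) * (z i * z j) := by
      intro j
      by_cases h : i = j
      · subst h
        simp only [if_pos rfl, eq_self_iff_true, if_true]
        field_simp [hui i]
      · simp only [if_neg h]
        field_simp [hui i]
        ring
    simp only [hsplit, Finset.sum_add_distrib, Finset.sum_ite_eq, Finset.mem_univ, if_true]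
    have e1 : z i ^ 2 * (p i / u i) * (a0 i + ∑ k, a i k * u k)
        = p i * a0 i * (z i ^ 2 / u i) + ∑ k, (p i * a i k) * (u k * z i ^ 2 / u i) := by
      rw [mul_add]
      congr 1
      · ring
      · rw [Finset.mul_sum]
        exact Finset.sum_congr rfl fun k _ => by ring
    rw [e1]
    simp only [hg, mul_add, Finset.sum_add_distrib]
    ring
  rw [hRHS]
  have hA : c' * (∑ i, z i ^ 2 / u i) ≤ ∑ i, p i * a0 i * (z i ^ 2 / u i) := by
    rw [Finset.mul_sum]
    refine Finset.sum_le_sum fun i _ => ?_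
    exact mul_le_mul_of_nonneg_right (hc'le i)
      (div_nonneg (sq_nonneg _) (hu i).le)
  have hT : c * (∑ i, z i ^ 2) ≤ ∑ i, ∑ j, g i j := by
    have hsym : ∀ i j, 0 ≤ g i j + g j i := by
      intro i j
      have key : g i j + g j i
          = (p i * a i j) * ((u j * z i + u i * z j) ^ 2 / (u i * u j)) := by
        simp only [hg]
        rw [hdb' j i]
        field_simp [hui i, hui j]
        ring
      rw [key]
      exact mul_nonneg (hpa i j)
        (div_nonneg (sq_nonneg _) (mul_pos (hu i) (hu j)).le)
    have hdiag : ∀ i, 2 * (c * z i ^ 2) ≤ g i i + g i i := by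
      intro i
      have hgii : g i i = (p i * a i i) * (2 * z i ^ 2) := by
        simp only [hg]
        rw [mul_div_assoc, mul_comm (u i), div_mul_cancel₀ _ (hui i)]
        ring
      rw [hgii]
      nlinarith [hcle i, sq_nonneg (z i), mul_pos (hp i) (haii i)]
    have hswap : ∑ i, ∑ j, g j i = ∑ i, ∑ j, g i j := Finset.sum_comm
    have h1 : ∑ i, (g i i + g i i) ≤ ∑ i, ∑ j, (g i j + g j i) := by
      refine Finset.sum_le_sum fun i _ => ?_
      exact Finset.single_le_sum (fun j _ => hsym i j) (Finset.mem_univ i)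
    have h2 : ∑ i, ∑ j, (g i j + g j i) = 2 * ∑ i, ∑ j, g i j := by
      simp only [Finset.sum_add_distrib, hswap]; ring
    have h3 : 2 * (c * ∑ i, z i ^ 2) ≤ ∑ i, (g i i + g i i) := by
      calc 2 * (c * ∑ i, z i ^ 2) = ∑ i, 2 * (c * z i ^ 2) := by
            rw [Finset.mul_sum, Finset.mul_sum]
        _ ≤ _ := Finset.sum_le_sum fun i _ => hdiag i
    linarith [h1, h2, h3]
  linarith [hA, hT]
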